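/- Let n ≥ 1, l ∈ [0,2n], 𝐚 = (a_1,…,a_l) a strictly increasing sequence of integers in [1,2n], and i ∈ [1,l]. Then: (1) if a_i is odd, then |Rem(a_1,…,a_{i−1})| ≥ 2i − a_i − 1; (2) if a_i is even, then |Rem(a_1,…,a_i)| ≥ 2i − a_i. -/

import Mathlib

/-- `remAux` computes the set of removable entries of a strictly increasing
sequence, given as a list in *reversed* order (so the head is the last entry). -/
def remAux : List ℕ → Finset ℕ
  | [] => ∅
  | [_] => ∅
  | b :: a :: rest =>
    if Even b ∧ a + 1 = b ∧ b + (remAux rest).card + 1 < 2 * (rest.length + 2) then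
      insert a (insert b (remAux rest))
    else remAux (a :: rest)

/-- `remSet 𝐚` : the set `Rem(𝐚)` of removable entries of the strictly
increasing sequence `𝐚 = (a_1, …, a_l)` (given in its natural order). -/
def remSet (l : List ℕ) : Finset ℕ := remAux l.reverse

/-- `redSeq 𝐚` : the reduction `red(𝐚)`, i.e. `𝐚` with the removable entries
removed. -/
def redSeq (l : List ℕ) : List ℕ := l.filter (fun x => decide (x ∉ remSet l))


lemma remAux_subset (L : List ℕ) : remAux L ⊆ L.toFinset := by
  induction L using remAux.induct with
  | case1 => simp [remAux]
  | case2 x => simp [remAux]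
  | case3 b a rest hc ih =>
      rw [remAux, if_pos hc]
      intro x hx
      simp only [Finset.mem_insert, List.toFinset_cons] at hx ⊢
      rcases hx with h | h | h
      · exact Or.inr (Or.inl h)
      · exact Or.inl h
      · exact Or.inr (Or.inr (ih h))
  | case4 b a rest hc ih ih2 =>
      rw [remAux, if_neg hc]
      intro x hx
      have := ih2 hx
      simp_all [List.toFinset_cons]

lemma remAux_odd_head (a : ℕ) (t : List ℕ) (ha : ¬ Even a) : remAux (a :: t) = remAux t := by
  cases t with
  | nil => rfl
  | cons c t' =>
      rw [remAux, if_neg]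
      rintro ⟨h, -⟩; exact ha h

lemma notmem_of_gt {L : List ℕ} {x : ℕ} (h : ∀ y ∈ L, y < x) : x ∉ remAux L := by
  intro hx
  have := remAux_subset L hx
  exact absurd (h x (by simpa using this)) (lt_irrefl x)

lemma remAux_card_even (L : List ℕ) (h : L.Chain' (· > ·)) : Even (remAux L).card := by
  induction L using remAux.induct with
  | case1 => simp [remAux]
  | case2 x => simp [remAux]
  | case3 b a rest hc ih =>
      rw [remAux, if_pos hc]
      have hp := List.isChain_iff_pairwise.mp h
      rw [List.pairwise_cons] at hp
      have hba : b > a := hp.1 a (by simp)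
      have hb : ∀ y ∈ rest, y < b := fun y hy => hp.1 y (by simp [hy])
      have hp2 := hp.2
      rw [List.pairwise_cons] at hp2
      have ha : ∀ y ∈ rest, y < a := hp2.1
      have hbn : b ∉ remAux rest := notmem_of_gt hb
      have han : a ∉ insert b (remAux rest) := by
        simp only [Finset.mem_insert]
        rintro (rfl | hx)
        · exact absurd hba (lt_irrefl _)
        · exact notmem_of_gt ha hx
      rw [Finset.card_insert_of_notMem han, Finset.card_insert_of_notMem hbn]
      obtain ⟨k, hk⟩ := ih (List.isChain_iff_pairwise.mpr hp2.2)
      exact ⟨k + 1, by omega⟩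
  | case4 b a rest hc ih ih2 =>
      rw [remAux, if_neg hc]
      exact ih2 h.tail

lemma card_insert2 (b a : ℕ) (rest : List ℕ) (h : (b :: a :: rest).Chain' (· > ·)) :
    (insert a (insert b (remAux rest))).card = (remAux rest).card + 2 := by
  have hp := List.isChain_iff_pairwise.mp h
  rw [List.pairwise_cons] at hp
  have hba : b > a := hp.1 a (by simp)
  have hb : ∀ y ∈ rest, y < b := fun y hy => hp.1 y (by simp [hy])
  have hp2 := hp.2
  rw [List.pairwise_cons] at hp2
  have hbn : b ∉ remAux rest := notmem_of_gt hb
  have han : a ∉ insert b (remAux rest) := by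
    simp only [Finset.mem_insert]
    rintro (rfl | hx)
    · exact absurd hba (lt_irrefl _)
    · exact notmem_of_gt hp2.1 hx
  rw [Finset.card_insert_of_notMem han, Finset.card_insert_of_notMem hbn]

lemma main_lemma : ∀ (L : List ℕ), L.Chain' (· > ·) → (∀ x ∈ L, 1 ≤ x) →
    ∀ b rest, L = b :: rest →
    ((¬ Even b → 2 * (L.length : ℤ) - b - 1 ≤ ((remAux rest).card : ℤ)) ∧
     (Even b → 2 * (L.length : ℤ) - b ≤ ((remAux L).card : ℤ))) := by
  intro L
  induction L with
  | nil => intro _ _ b rest h; exact absurd h (by simp)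
  | cons b rest IH =>
    intro hch hpos b' rest' heq
    cases heq
    have hb1 : 1 ≤ b := hpos b (by simp)
    constructor
    · -- odd case
      intro hbo
      have hbmod : b % 2 = 1 := Nat.odd_iff.mp (Nat.not_even_iff_odd.mp hbo)
      cases rest with
      | nil => simp [remAux]; omega
      | cons a rest' =>
        have hab : a < b := (List.isChain_cons_cons.mp hch).1
        have IH' := IH hch.tail (fun x hx => hpos x (by simp [hx])) a rest' rfl
        by_cases hae : Even a
        · have := IH'.2 hae
          simp only [List.length_cons] at this ⊢
          omega
        · have hrw : remAux (a :: rest') = remAux rest' := remAux_odd_head a rest' hae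
          have hamod : a % 2 = 1 := Nat.odd_iff.mp (Nat.not_even_iff_odd.mp hae)
          have := IH'.1 hae
          rw [hrw]
          simp only [List.length_cons] at this ⊢
          omega
    · -- even case
      intro hbe
      have hbmod : b % 2 = 0 := Nat.even_iff.mp hbe
      cases rest with
      | nil => simp [remAux]; omega
      | cons a rest' =>
        have hab : a < b := (List.isChain_cons_cons.mp hch).1
        have IH' := IH hch.tail (fun x hx => hpos x (by simp [hx])) a rest' rfl
        by_cases hC : Even b ∧ a + 1 = b ∧ b + (remAux rest').card + 1 < 2 * (rest'.length + 2)
        · rw [remAux, if_pos hC, card_insert2 b a rest' hch]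
          have hae : ¬ Even a := by
            intro h; obtain ⟨-, h2, -⟩ := hC
            have := Nat.even_iff.mp h; omega
          have := IH'.1 hae
          simp only [List.length_cons] at this ⊢
          obtain ⟨-, h2, -⟩ := hC
          omega
        · rw [remAux, if_neg hC]
          by_cases hae : Even a
          · have := IH'.2 hae
            have hamod : a % 2 = 0 := Nat.even_iff.mp hae
            simp only [List.length_cons] at this ⊢
            omega
          · have hrw : remAux (a :: rest') = remAux rest' := remAux_odd_head a rest' hae
            have hamod : a % 2 = 1 := Nat.odd_iff.mp (Nat.not_even_iff_odd.mp hae)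
            have h1 := IH'.1 hae
            rw [hrw]
            simp only [List.length_cons] at h1 ⊢
            by_cases hab1 : a + 1 = b
            · have hnc : ¬ (b + (remAux rest').card + 1 < 2 * (rest'.length + 2)) := by
                intro h; exact hC ⟨hbe, hab1, h⟩
              obtain ⟨k, hk⟩ := remAux_card_even rest' hch.tail.tail
              omega
            · omega

theorem stmt11 (n : ℕ) (hn : 1 ≤ n) (a : List ℕ)
    (hinc : a.Chain' (· < ·)) (hbd : ∀ x ∈ a, 1 ≤ x ∧ x ≤ 2 * n)
    (hlen : a.length ≤ 2 * n) (i : ℕ) (hi1 : 1 ≤ i) (hil : i ≤ a.length) :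
    (Odd (a.getD (i - 1) 0) →
      2 * (i : ℤ) - a.getD (i - 1) 0 - 1 ≤ ((remSet (a.take (i - 1))).card : ℤ)) ∧
    (Even (a.getD (i - 1) 0) →
      2 * (i : ℤ) - a.getD (i - 1) 0 ≤ ((remSet (a.take i)).card : ℤ)) := by
  set b : ℕ := a.getD (i - 1) 0 with hb
  have hi1' : i - 1 < a.length := by omega
  have hbget : a[i - 1]'hi1' = b := by rw [hb, List.getD_eq_getElem a 0 hi1']
  have htake : a.take i = a.take (i - 1) ++ [b] := by
    have : i = (i - 1) + 1 := by omega
    rw [this, List.take_succ, List.getElem?_eq_getElem hi1', hbget]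
    rfl
  have hLeq : (a.take i).reverse = b :: (a.take (i - 1)).reverse := by
    rw [htake, List.reverse_append]
    rfl
  have hch : ((a.take i).reverse).Chain' (· > ·) := by
    rw [List.Chain', List.isChain_reverse]
    exact (hinc.take i)
  have hpos : ∀ x ∈ (a.take i).reverse, 1 ≤ x := by
    intro x hx
    exact (hbd x (List.mem_of_mem_take (List.mem_reverse.mp hx))).1
  have hlenL : ((a.take i).reverse).length = i := by
    simp [List.length_take]; omega
  have H := main_lemma ((a.take i).reverse) hch hpos b ((a.take (i - 1)).reverse) hLeq
  rw [hlenL] at H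
  constructor
  · intro ho
    exact H.1 (Nat.not_even_iff_odd.mpr ho)
  · intro he
    exact H.2 he
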